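/- Suppose P_x is stochastically transitive for all x and the map x ↦ (p_{i,j}(x))_{i<j} is M-Lipschitz in the sense Σ_{i<j} |p_{i,j}(x) - p_{i,j}(x')| ≤ M‖x - x'‖. Then for any partition P of X and any ranking rule s_P that on each cell C takes as value a Kemeny median of P_C, the excess risk satisfies R(s_P) - R* ≤ M δ_P, where δ_P = max_{C∈P} sup_{(x,x')∈C²} ‖x - x'‖. -/

import Mathlib

open Finset

/-- The set of ordered pairs (i,j) with i < j. -/
def pairs (n : ℕ) : Finset (Fin n × Fin n) :=
  Finset.univ.filter fun p => p.1 < p.2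

/-- Kendall tau distance between two permutations. -/
noncomputable def dtau {n : ℕ} (σ σ' : Equiv.Perm (Fin n)) : ℝ :=
  ∑ p ∈ pairs n,
    if (((σ p.1 : ℕ) : ℤ) - ((σ p.2 : ℕ) : ℤ)) * (((σ' p.1 : ℕ) : ℤ) - ((σ' p.2 : ℕ) : ℤ)) < 0
    then 1 else 0

/-- Expected Kendall tau distance L_P(σ) = E_{Σ∼P}[d_τ(Σ,σ)]. -/
noncomputable def L {n : ℕ} (P : Equiv.Perm (Fin n) → ℝ) (σ : Equiv.Perm (Fin n)) : ℝ :=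
  ∑ τ : Equiv.Perm (Fin n), P τ * dtau τ σ

/-- Pairwise probability p_{i,j} = P{Σ(i) < Σ(j)}. -/
noncomputable def pp {n : ℕ} (P : Equiv.Perm (Fin n) → ℝ) (i j : Fin n) : ℝ :=
  ∑ τ : Equiv.Perm (Fin n), P τ * (if τ i < τ j then 1 else 0)

/-- P is a probability distribution on S_n. -/
def IsProb {n : ℕ} (P : Equiv.Perm (Fin n) → ℝ) : Prop :=
  (∀ τ, 0 ≤ P τ) ∧ ∑ τ : Equiv.Perm (Fin n), P τ = 1

/-- σ is a Kemeny median of P. -/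
def IsMedian {n : ℕ} (P : Equiv.Perm (Fin n) → ℝ) (σ : Equiv.Perm (Fin n)) : Prop :=
  ∀ τ, L P σ ≤ L P τ

/-- L*_P = min_σ L_P(σ). -/
noncomputable def Lstar {n : ℕ} (P : Equiv.Perm (Fin n) → ℝ) : ℝ :=
  ⨅ σ : Equiv.Perm (Fin n), L P σ

/-- Stochastic transitivity. -/
def StochTrans {n : ℕ} (P : Equiv.Perm (Fin n) → ℝ) : Prop :=
  ∀ i j k : Fin n, 1/2 ≤ pp P i j → 1/2 ≤ pp P j k → 1/2 ≤ pp P i k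

/-- Strict stochastic transitivity. -/
def StrictStochTrans {n : ℕ} (P : Equiv.Perm (Fin n) → ℝ) : Prop :=
  StochTrans P ∧ ∀ i j : Fin n, i < j → pp P i j ≠ 1/2

open MeasureTheory

instance {n : ℕ} : MeasurableSpace (Equiv.Perm (Fin n)) := ⊤

/-- Risk of a ranking rule s: R(s) = E_{X∼μ}[L_{P_X}(s(X))]. -/
noncomputable def Risk {n : ℕ} {X : Type*} [MeasurableSpace X] (μ : Measure X)
    (P : X → Equiv.Perm (Fin n) → ℝ) (s : X → Equiv.Perm (Fin n)) : ℝ :=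
  ∫ x, L (P x) (s x) ∂μ

/-- Minimum risk over all measurable ranking rules. -/
noncomputable def RiskStar {n : ℕ} {X : Type*} [MeasurableSpace X] (μ : Measure X)
    (P : X → Equiv.Perm (Fin n) → ℝ) : ℝ :=
  sInf {r | ∃ s : X → Equiv.Perm (Fin n), Measurable s ∧ r = Risk μ P s}

/-- Conditional law of Σ given X ∈ C. -/
noncomputable def condP {n : ℕ} {X : Type*} [MeasurableSpace X] (μ : Measure X)
    (P : X → Equiv.Perm (Fin n) → ℝ) (C : Set X) (τ : Equiv.Perm (Fin n)) : ℝ :=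
  (∫ x in C, P x τ ∂μ) / (μ C).toReal

section Aux
open Finset
variable {n : ℕ}

lemma mem_pairs {p : Fin n × Fin n} : p ∈ pairs n ↔ p.1 < p.2 := by
  simp [pairs]

lemma pp_nonneg {P : Equiv.Perm (Fin n) → ℝ} (hP : IsProb P) (i j : Fin n) : 0 ≤ pp P i j :=
  Finset.sum_nonneg fun τ _ => mul_nonneg (hP.1 τ) (by positivity)

lemma pp_le_one {P : Equiv.Perm (Fin n) → ℝ} (hP : IsProb P) (i j : Fin n) : pp P i j ≤ 1 := by
  have : pp P i j ≤ ∑ τ : Equiv.Perm (Fin n), P τ := by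
    refine Finset.sum_le_sum fun τ _ => ?_
    have := hP.1 τ
    split <;> nlinarith
  rw [hP.2] at this
  exact this

lemma pp_self {P : Equiv.Perm (Fin n) → ℝ} (i : Fin n) : pp P i i = 0 := by
  simp [pp]

lemma pp_add {P : Equiv.Perm (Fin n) → ℝ} (hP : IsProb P) {i j : Fin n} (hne : i ≠ j) :
    pp P i j + pp P j i = 1 := by
  rw [pp, pp, ← Finset.sum_add_distrib]
  have : ∀ τ : Equiv.Perm (Fin n), (P τ * (if τ i < τ j then (1:ℝ) else 0) + P τ * (if τ j < τ i then (1:ℝ) else 0)) = P τ := by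
    intro τ
    have h : τ i ≠ τ j := fun h => hne (τ.injective h)
    rcases lt_or_gt_of_ne h with h1 | h1
    · rw [if_pos h1, if_neg (asymm h1)]; ring
    · rw [if_neg (asymm h1), if_pos h1]; ring
  rw [Finset.sum_congr rfl fun τ _ => this τ, hP.2]

lemma Lform {P : Equiv.Perm (Fin n) → ℝ} (hP : IsProb P) (σ : Equiv.Perm (Fin n)) :
    L P σ = ∑ p ∈ pairs n, (if σ p.1 < σ p.2 then 1 - pp P p.1 p.2 else pp P p.1 p.2) := by
  rw [L]
  simp_rw [dtau, Finset.mul_sum]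
  rw [Finset.sum_comm]
  refine Finset.sum_congr rfl fun p hp => ?_
  have hlt : p.1 < p.2 := mem_pairs.mp hp
  have hne : p.1 ≠ p.2 := ne_of_lt hlt
  have key : ∀ ρ : Equiv.Perm (Fin n), ρ p.1 ≠ ρ p.2 := fun ρ h => hne (ρ.injective h)
  by_cases hσ : σ p.1 < σ p.2
  · have hσc : (((σ p.1 : ℕ) : ℤ) - ((σ p.2 : ℕ) : ℤ)) < 0 := by
      have := Fin.lt_iff_val_lt_val.mp hσ; omega
    rw [if_pos hσ]
    have h2 : ∀ τ : Equiv.Perm (Fin n),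
        (P τ * if (((τ p.1 : ℕ) : ℤ) - ((τ p.2 : ℕ) : ℤ)) * (((σ p.1 : ℕ) : ℤ) - ((σ p.2 : ℕ) : ℤ)) < 0 then (1:ℝ) else 0)
        = P τ * (if τ p.2 < τ p.1 then 1 else 0) := by
      intro τ
      congr 1
      refine if_congr ?_ rfl rfl
      have hτ : (τ p.1 : ℕ) ≠ (τ p.2 : ℕ) := fun h => key τ (Fin.val_injective h)
      constructor
      · intro hmul
        by_contra hc
        have : (τ p.1 : ℕ) < (τ p.2 : ℕ) := by
          have := Fin.lt_iff_val_lt_val.not.mp hc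
          omega
        have hA : (((τ p.1 : ℕ) : ℤ) - ((τ p.2 : ℕ) : ℤ)) < 0 := by omega
        nlinarith
      · intro hlt'
        have hA : 0 < (((τ p.1 : ℕ) : ℤ) - ((τ p.2 : ℕ) : ℤ)) := by
          have := Fin.lt_iff_val_lt_val.mp hlt'; omega
        exact mul_neg_of_pos_of_neg hA hσc
    simp_rw [h2]
    have : pp P p.1 p.2 + pp P p.2 p.1 = 1 := pp_add hP hne
    rw [show (∑ τ : Equiv.Perm (Fin n), P τ * if τ p.2 < τ p.1 then (1:ℝ) else 0) = pp P p.2 p.1 from rfl]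
    linarith
  · have hσ' : σ p.2 < σ p.1 := lt_of_le_of_ne (not_lt.mp hσ) (fun h => key σ h.symm)
    have hσc : 0 < (((σ p.1 : ℕ) : ℤ) - ((σ p.2 : ℕ) : ℤ)) := by
      have := Fin.lt_iff_val_lt_val.mp hσ'; omega
    rw [if_neg hσ]
    have h2 : ∀ τ : Equiv.Perm (Fin n),
        (P τ * if (((τ p.1 : ℕ) : ℤ) - ((τ p.2 : ℕ) : ℤ)) * (((σ p.1 : ℕ) : ℤ) - ((σ p.2 : ℕ) : ℤ)) < 0 then (1:ℝ) else 0)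
        = P τ * (if τ p.1 < τ p.2 then 1 else 0) := by
      intro τ
      congr 1
      refine if_congr ?_ rfl rfl
      have hτ : (τ p.1 : ℕ) ≠ (τ p.2 : ℕ) := fun h => key τ (Fin.val_injective h)
      constructor
      · intro hmul
        by_contra hc
        have : (τ p.2 : ℕ) < (τ p.1 : ℕ) := by
          have := Fin.lt_iff_val_lt_val.not.mp hc
          omega
        have hA : 0 < (((τ p.1 : ℕ) : ℤ) - ((τ p.2 : ℕ) : ℤ)) := by omega
        nlinarith
      · intro hlt'
        have hA : (((τ p.1 : ℕ) : ℤ) - ((τ p.2 : ℕ) : ℤ)) < 0 := by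
          have := Fin.lt_iff_val_lt_val.mp hlt'; omega
        exact mul_neg_of_neg_of_pos hA hσc
    simp_rw [h2]
    rfl
end Aux

section Median
open Finset
variable {n : ℕ}

def mscoreB (b : Fin n → Fin n → Bool) (i : Fin n) : ℕ :=
  (Finset.univ.filter fun j => b i j).card

def mkeyB (b : Fin n → Fin n → Bool) (i : Fin n) : ℕ := n * (n - mscoreB b i) + i.val

def mpermB (b : Fin n → Fin n → Bool) : Equiv.Perm (Fin n) :=
  (Tuple.sort (mkeyB b))⁻¹

noncomputable def mperm (q : Fin n → Fin n → ℝ) : Equiv.Perm (Fin n) :=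
  mpermB (fun i j => decide ((1:ℝ)/2 ≤ q i j))

lemma mpermB_lt {b : Fin n → Fin n → Bool} {i j : Fin n} (h : mkeyB b i < mkeyB b j) :
    mpermB b i < mpermB b j := by
  by_contra hc
  have hle : mpermB b j ≤ mpermB b i := not_lt.mp hc
  have h2 := Tuple.monotone_sort (mkeyB b) hle
  simp only [Function.comp_apply, mpermB, Equiv.Perm.inv_def, Equiv.apply_symm_apply] at h2
  omega

lemma mperm_lt {q : Fin n → Fin n → ℝ}
    (htrans : ∀ i j k, 1/2 ≤ q i j → 1/2 ≤ q j k → 1/2 ≤ q i k)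
    (hself : ∀ i, ¬ ((1:ℝ)/2 ≤ q i i)) {i j : Fin n} (h : 1/2 < q i j) :
    mperm q i < mperm q j := by
  set b : Fin n → Fin n → Bool := fun i j => decide ((1:ℝ)/2 ≤ q i j) with hb
  have hscore : mscoreB b j < mscoreB b i := by
    apply Finset.card_lt_card
    have hsub : (univ.filter fun k => b j k) ⊆ (univ.filter fun k => b i k) := by
      intro k hk
      simp only [hb, mem_filter, mem_univ, true_and, decide_eq_true_eq] at hk ⊢
      exact htrans i j k (le_of_lt h) hk
    rw [Finset.ssubset_iff_of_subset hsub]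
    refine ⟨j, ?_, ?_⟩
    · simp only [hb, mem_filter, mem_univ, true_and, decide_eq_true_eq]
      exact le_of_lt h
    · simp only [hb, mem_filter, mem_univ, true_and, decide_eq_true_eq]
      exact hself j
  have hkey : mkeyB b i < mkeyB b j := by
    have h1 : mscoreB b i ≤ n := by
      have := Finset.card_filter_le (univ : Finset (Fin n)) (fun k => b i k = true)
      simpa [mscoreB] using this
    have h2 : n - mscoreB b i + 1 ≤ n - mscoreB b j := by omega
    have h3 := Nat.mul_le_mul_left n h2
    have h4 : i.val < n := i.isLt
    have h5 : mkeyB b i = n * (n - mscoreB b i) + i.val := rfl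
    have h6 : mkeyB b j = n * (n - mscoreB b j) + j.val := rfl
    have h7 : n * (n - mscoreB b i + 1) = n * (n - mscoreB b i) + n := by ring
    omega
  exact mpermB_lt hkey

lemma mperm_consist₁ {P : Equiv.Perm (Fin n) → ℝ} (hP : IsProb P) (hT : StochTrans P)
    {i j : Fin n} (hij : i ≠ j) (h : mperm (pp P) i < mperm (pp P) j) : 1/2 ≤ pp P i j := by
  by_contra hc
  have h1 : 1/2 < pp P j i := by
    have := pp_add hP hij
    linarith [not_le.mp hc]
  have h2 : mperm (pp P) j < mperm (pp P) i :=
    mperm_lt hT (fun k => by rw [pp_self]; norm_num) h1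
  exact absurd h (asymm h2)

lemma mperm_consist₂ {P : Equiv.Perm (Fin n) → ℝ} (hP : IsProb P) (hT : StochTrans P)
    {i j : Fin n} (h : ¬ mperm (pp P) i < mperm (pp P) j) : pp P i j ≤ 1/2 := by
  by_contra hc
  exact h (mperm_lt hT (fun k => by rw [pp_self]; norm_num) (not_le.mp hc))

noncomputable def Lmin {n : ℕ} (P : Equiv.Perm (Fin n) → ℝ) : ℝ :=
  ∑ p ∈ pairs n, min (pp P p.1 p.2) (1 - pp P p.1 p.2)

lemma Lmin_le {P : Equiv.Perm (Fin n) → ℝ} (hP : IsProb P) (σ : Equiv.Perm (Fin n)) :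
    Lmin P ≤ L P σ := by
  rw [Lform hP]
  refine Finset.sum_le_sum fun p hp => ?_
  split
  · exact min_le_right _ _
  · exact min_le_left _ _

lemma L_mperm_eq {P : Equiv.Perm (Fin n) → ℝ} (hP : IsProb P) (hT : StochTrans P) :
    L P (mperm (pp P)) = Lmin P := by
  rw [Lform hP, Lmin]
  refine Finset.sum_congr rfl fun p hp => ?_
  have hne : p.1 ≠ p.2 := ne_of_lt (mem_pairs.mp hp)
  by_cases hm : mperm (pp P) p.1 < mperm (pp P) p.2
  · rw [if_pos hm]
    have := mperm_consist₁ hP hT hne hm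
    rw [min_eq_right]; linarith
  · rw [if_neg hm]
    have := mperm_consist₂ hP hT hm
    rw [min_eq_left]; linarith

lemma dtau_nonneg {σ σ' : Equiv.Perm (Fin n)} : 0 ≤ dtau σ σ' :=
  Finset.sum_nonneg fun p _ => by positivity

lemma dtau_le {σ σ' : Equiv.Perm (Fin n)} : dtau σ σ' ≤ ((pairs n).card : ℝ) := by
  rw [dtau]
  calc ∑ p ∈ pairs n, (if (((σ p.1 : ℕ) : ℤ) - ((σ p.2 : ℕ) : ℤ)) * (((σ' p.1 : ℕ) : ℤ) - ((σ' p.2 : ℕ) : ℤ)) < 0 then (1:ℝ) else 0)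
      ≤ ∑ p ∈ pairs n, (1:ℝ) := Finset.sum_le_sum fun p _ => by split <;> norm_num
    _ = ((pairs n).card : ℝ) := by simp

lemma L_nonneg {P : Equiv.Perm (Fin n) → ℝ} (hP : IsProb P) (σ : Equiv.Perm (Fin n)) :
    0 ≤ L P σ :=
  Finset.sum_nonneg fun τ _ => mul_nonneg (hP.1 τ) dtau_nonneg

lemma L_le {P : Equiv.Perm (Fin n) → ℝ} (hP : IsProb P) (σ : Equiv.Perm (Fin n)) :
    L P σ ≤ ((pairs n).card : ℝ) := by
  have : L P σ ≤ ∑ τ : Equiv.Perm (Fin n), P τ * ((pairs n).card : ℝ) :=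
    Finset.sum_le_sum fun τ _ => mul_le_mul_of_nonneg_left dtau_le (hP.1 τ)
  rw [← Finset.sum_mul, hP.2, one_mul] at this
  exact this

end Median

section Meas
open Finset MeasureTheory
variable {n : ℕ} {E : Type*} [MeasurableSpace E]

instance permMSC : MeasurableSingletonClass (Equiv.Perm (Fin n)) :=
  ⟨fun _ => MeasurableSpace.measurableSet_top⟩

lemma measurable_pp {P : E → Equiv.Perm (Fin n) → ℝ} (hmeas : ∀ τ, Measurable fun x => P x τ)
    (i j : Fin n) : Measurable fun x => pp (P x) i j := by
  unfold pp
  exact Finset.measurable_sum _ fun τ _ => (hmeas τ).mul_const _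

lemma measurable_decide_le {f : E → ℝ} (hf : Measurable f) (c : ℝ) :
    Measurable fun x => decide (c ≤ f x) := by
  apply measurable_to_countable'
  intro b
  cases b
  · have : (fun x => decide (c ≤ f x)) ⁻¹' {false} = {x | f x < c} := by
      ext x
      simp [decide_eq_false_iff_not, not_le]
    rw [this]
    exact measurableSet_lt hf measurable_const
  · have : (fun x => decide (c ≤ f x)) ⁻¹' {true} = {x | c ≤ f x} := by
      ext x
      simp [decide_eq_true_eq]
    rw [this]
    exact measurableSet_le measurable_const hf

lemma measurable_mperm {P : E → Equiv.Perm (Fin n) → ℝ} (hmeas : ∀ τ, Measurable fun x => P x τ) :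
    Measurable fun x => mperm (fun i j => pp (P x) i j) := by
  have hB : Measurable fun x => (fun i j => decide ((1:ℝ)/2 ≤ pp (P x) i j)) := by
    apply measurable_pi_lambda
    intro i
    apply measurable_pi_lambda
    intro j
    exact measurable_decide_le (measurable_pp hmeas i j) _
  exact (measurable_of_countable mpermB).comp hB

lemma integrable_of_bdd {μ : Measure E} [IsFiniteMeasure μ] {f : E → ℝ} (hf : Measurable f)
    (c : ℝ) (h : ∀ x, |f x| ≤ c) : Integrable f μ :=
  Integrable.mono' (integrable_const c) hf.aestronglyMeasurable (ae_of_all _ h)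

end Meas

section Helpers
open Finset MeasureTheory
variable {n : ℕ} {E : Type*} [MeasurableSpace E]

/-- pairwise prob as fn of x -/
noncomputable def qq (P : E → Equiv.Perm (Fin n) → ℝ) (p : Fin n × Fin n) (x : E) : ℝ :=
  pp (P x) p.1 p.2

/-- median selector -/
noncomputable def mm (P : E → Equiv.Perm (Fin n) → ℝ) (x : E) : Equiv.Perm (Fin n) :=
  mperm (fun i j => pp (P x) i j)

/-- pair orientation of the median -/
noncomputable def vv (P : E → Equiv.Perm (Fin n) → ℝ) (p : Fin n × Fin n) (x : E) : ℝ :=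
  if mm P x p.1 < mm P x p.2 then 1 else 0

variable {P : E → Equiv.Perm (Fin n) → ℝ}

lemma qq_mem (hP : ∀ x, IsProb (P x)) (p : Fin n × Fin n) (x : E) :
    0 ≤ qq P p x ∧ qq P p x ≤ 1 :=
  ⟨pp_nonneg (hP x) _ _, pp_le_one (hP x) _ _⟩

lemma measurable_qq (hmeas : ∀ τ, Measurable fun x => P x τ) (p : Fin n × Fin n) :
    Measurable (qq P p) := measurable_pp hmeas p.1 p.2

lemma measurable_mm (hmeas : ∀ τ, Measurable fun x => P x τ) : Measurable (mm P) :=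
  measurable_mperm hmeas

lemma measurable_vv (hmeas : ∀ τ, Measurable fun x => P x τ) (p : Fin n × Fin n) :
    Measurable (vv P p) := by
  have hset : MeasurableSet {x : E | mm P x p.1 < mm P x p.2} :=
    measurable_mm hmeas (MeasurableSpace.measurableSet_top
      (s := {ρ : Equiv.Perm (Fin n) | ρ p.1 < ρ p.2}))
  exact Measurable.ite hset measurable_const measurable_const

lemma Lmin_nonneg (hP : ∀ x, IsProb (P x)) (x : E) : 0 ≤ Lmin (P x) := by
  refine Finset.sum_nonneg fun p _ => ?_
  have h1 := pp_nonneg (hP x) p.1 p.2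
  have h2 := pp_le_one (hP x) p.1 p.2
  have : (0:ℝ) ≤ min (pp (P x) p.1 p.2) (1 - pp (P x) p.1 p.2) := le_min h1 (by linarith)
  exact this

lemma measurable_Lmin (hmeas : ∀ τ, Measurable fun x => P x τ) :
    Measurable fun x => Lmin (P x) := by
  unfold Lmin
  exact Finset.measurable_sum _ fun p _ =>
    Measurable.min (measurable_pp hmeas p.1 p.2) (measurable_const.sub (measurable_pp hmeas p.1 p.2))

lemma measurable_LP (hmeas : ∀ τ, Measurable fun x => P x τ) (ρ : Equiv.Perm (Fin n)) :
    Measurable fun x => L (P x) ρ := by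
  unfold L
  exact Finset.measurable_sum _ fun τ _ => (hmeas τ).mul_const _

lemma measurable_Lcomp (hmeas : ∀ τ, Measurable fun x => P x τ)
    {t : E → Equiv.Perm (Fin n)} (ht : Measurable t) :
    Measurable fun x => L (P x) (t x) := by
  have heq : (fun x => L (P x) (t x))
      = fun x => ∑ ρ : Equiv.Perm (Fin n), if t x = ρ then L (P x) ρ else 0 := by
    funext x
    rw [Finset.sum_ite_eq]
    simp
  rw [heq]
  refine Finset.measurable_sum _ fun ρ _ => ?_
  have hset : MeasurableSet {x : E | t x = ρ} :=
    ht (MeasurableSpace.measurableSet_top (s := ({ρ} : Set (Equiv.Perm (Fin n)))))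
  exact Measurable.ite hset (measurable_LP hmeas ρ) measurable_const

/-- key pointwise identity -/
lemma DKPI (hP : ∀ x, IsProb (P x)) (hT : ∀ x, StochTrans (P x)) (x x' : E) :
    L (P x) (mm P x') - Lmin (P x)
      = ∑ p ∈ pairs n, 2 * (vv P p x - vv P p x') * (qq P p x - 1/2) := by
  rw [Lform (hP x), Lmin, ← Finset.sum_sub_distrib]
  refine Finset.sum_congr rfl fun p hp => ?_
  have hne : p.1 ≠ p.2 := ne_of_lt (mem_pairs.mp hp)
  have h0 := pp_nonneg (hP x) p.1 p.2
  have h1 := pp_le_one (hP x) p.1 p.2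
  set t := pp (P x) p.1 p.2 with ht
  have hqt : qq P p x = t := rfl
  by_cases hx : mm P x p.1 < mm P x p.2
  · have hge : 1/2 ≤ t := mperm_consist₁ (hP x) (hT x) hne hx
    have hmin : min t (1 - t) = 1 - t := min_eq_right (by linarith)
    by_cases hx' : mm P x' p.1 < mm P x' p.2
    · rw [if_pos hx', hmin, hqt]
      simp only [vv, if_pos hx, if_pos hx']
      ring
    · rw [if_neg hx', hmin, hqt]
      simp only [vv, if_pos hx, if_neg hx']
      ring
  · have hle : t ≤ 1/2 := mperm_consist₂ (hP x) (hT x) hx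
    have hmin : min t (1 - t) = t := min_eq_left (by linarith)
    by_cases hx' : mm P x' p.1 < mm P x' p.2
    · rw [if_pos hx', hmin, hqt]
      simp only [vv, if_neg hx, if_pos hx']
      ring
    · rw [if_neg hx', hmin, hqt]
      simp only [vv, if_neg hx, if_neg hx']
      ring

lemma L_mm_eq (hP : ∀ x, IsProb (P x)) (hT : ∀ x, StochTrans (P x)) (x : E) :
    L (P x) (mm P x) = Lmin (P x) := L_mperm_eq (hP x) (hT x)

end Helpers

section Cell
open Finset MeasureTheory
variable {n : ℕ} {E : Type*} [NormedAddCommGroup E] [MeasurableSpace E]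

lemma cell_bound (μ : Measure E) [IsProbabilityMeasure μ]
    (P : E → Equiv.Perm (Fin n) → ℝ)
    (hP : ∀ x, IsProb (P x)) (hmeas : ∀ τ, Measurable fun x => P x τ)
    (hT : ∀ x, StochTrans (P x))
    (M : ℝ) (hM : 0 ≤ M)
    (hLip : ∀ x x', ∑ p ∈ pairs n, |pp (P x) p.1 p.2 - pp (P x') p.1 p.2| ≤ M * ‖x - x'‖)
    (Cs : Set E) (hCs : MeasurableSet Cs) (hc : 0 < (μ Cs).toReal)
    (δ : ℝ) (hδ : ∀ x ∈ Cs, ∀ x' ∈ Cs, ‖x - x'‖ ≤ δ)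
    (σk : Equiv.Perm (Fin n)) (hmedk : IsMedian (condP μ P Cs) σk) :
    ∫ x in Cs, (L (P x) σk - Lmin (P x)) ∂μ ≤ (μ Cs).toReal * (M * δ) := by
  classical
  have hNp0 : (0:ℝ) ≤ ((pairs n).card : ℝ) := by positivity
  have hPle : ∀ x τ, P x τ ≤ 1 := by
    intro x τ
    have h := Finset.single_le_sum (f := P x) (fun τ _ => (hP x).1 τ) (Finset.mem_univ τ)
    rw [(hP x).2] at h
    exact h
  have hL1 : ∀ ρ, IntegrableOn (fun x => L (P x) ρ) Cs μ := fun ρ =>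
    integrable_of_bdd (μ := μ.restrict Cs) (measurable_LP hmeas ρ) _ fun x =>
      abs_le.mpr ⟨by linarith [L_nonneg (hP x) ρ], L_le (hP x) ρ⟩
  have hLm : IntegrableOn (fun x => Lmin (P x)) Cs μ :=
    integrable_of_bdd (μ := μ.restrict Cs) (measurable_Lmin hmeas) _ fun x =>
      abs_le.mpr ⟨by linarith [Lmin_nonneg hP x],
        (Lmin_le (hP x) 1).trans (L_le (hP x) 1)⟩
  have hQabs : ∀ (p : Fin n × Fin n) x, |qq P p x - 1/2| ≤ 1 := by
    intro p x
    have h := qq_mem hP p x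
    rw [abs_le]
    constructor <;> linarith [h.1, h.2]
  have hVabs : ∀ (p : Fin n × Fin n) x, |vv P p x| ≤ 1 := by
    intro p x
    unfold vv
    split <;> norm_num
  have hUint : ∀ p : Fin n × Fin n, IntegrableOn (fun x => qq P p x - 1/2) Cs μ := fun p =>
    integrable_of_bdd (μ := μ.restrict Cs) ((measurable_qq hmeas p).sub measurable_const) 1
      (hQabs p)
  have hVint : ∀ p : Fin n × Fin n, IntegrableOn (vv P p) Cs μ := fun p =>
    integrable_of_bdd (μ := μ.restrict Cs) (measurable_vv hmeas p) 1 (hVabs p)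
  have hVUint : ∀ p : Fin n × Fin n, IntegrableOn (fun x => vv P p x * (qq P p x - 1/2)) Cs μ :=
    fun p =>
    integrable_of_bdd (μ := μ.restrict Cs)
      ((measurable_vv hmeas p).mul ((measurable_qq hmeas p).sub measurable_const)) 1
      (fun x => by
        rw [abs_mul]
        calc |vv P p x| * |qq P p x - 1/2| ≤ 1 * 1 :=
              mul_le_mul (hVabs p x) (hQabs p x) (abs_nonneg _) zero_le_one
          _ = 1 := by norm_num)
  have hAQint : ∀ (x' : E) (p : Fin n × Fin n),
      IntegrableOn (fun x => |qq P p x - qq P p x'|) Cs μ := by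
    intro x' p
    refine integrable_of_bdd (μ := μ.restrict Cs)
      (((measurable_qq hmeas p).sub measurable_const).abs) 2 fun x => ?_
    rw [abs_abs]
    have h1 := qq_mem hP p x
    have h2 := qq_mem hP p x'
    rw [abs_le]
    constructor <;> linarith [h1.1, h1.2, h2.1, h2.2]
  -- conditional L identity and median property transfer
  have hLcond : ∀ ρ, L (condP μ P Cs) ρ = (∫ x in Cs, L (P x) ρ ∂μ) / (μ Cs).toReal := by
    intro ρ
    have hterm : ∀ τ : Equiv.Perm (Fin n),
        condP μ P Cs τ * dtau τ ρ = (∫ x in Cs, P x τ * dtau τ ρ ∂μ) / (μ Cs).toReal := by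
      intro τ
      rw [condP, div_mul_eq_mul_div, integral_mul_const]
    rw [L, Finset.sum_congr rfl fun τ _ => hterm τ, ← Finset.sum_div]
    congr 1
    rw [← integral_finset_sum]
    · rfl
    · intro τ _
      refine integrable_of_bdd (μ := μ.restrict Cs) ((hmeas τ).mul_const _)
        ((pairs n).card : ℝ) fun x => ?_
      rw [abs_mul]
      have h1 : |P x τ| ≤ 1 := abs_le.mpr ⟨by linarith [(hP x).1 τ], hPle x τ⟩
      have h2 : |dtau τ ρ| ≤ ((pairs n).card : ℝ) :=
        abs_le.mpr ⟨by linarith [dtau_nonneg (σ := τ) (σ' := ρ)], dtau_le⟩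
      calc |P x τ| * |dtau τ ρ| ≤ 1 * ((pairs n).card : ℝ) :=
            mul_le_mul h1 h2 (abs_nonneg _) zero_le_one
        _ = _ := one_mul _
  have hmedInt : ∀ τ, ∫ x in Cs, L (P x) σk ∂μ ≤ ∫ x in Cs, L (P x) τ ∂μ := by
    intro τ
    have h := hmedk τ
    rw [hLcond σk, hLcond τ] at h
    have h2 := mul_le_mul_of_nonneg_right h (le_of_lt hc)
    rwa [div_mul_cancel₀ _ (ne_of_gt hc), div_mul_cancel₀ _ (ne_of_gt hc)] at h2
  -- Step C1
  have C1 : ∀ x' : E, (∫ x in Cs, (L (P x) σk - Lmin (P x)) ∂μ)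
      ≤ ∑ p ∈ pairs n, (2 * (∫ x in Cs, vv P p x * (qq P p x - 1/2) ∂μ)
          - (2 * (∫ x in Cs, (qq P p x - 1/2) ∂μ)) * vv P p x') := by
    intro x'
    have hstep1 : (∫ x in Cs, (L (P x) σk - Lmin (P x)) ∂μ)
        ≤ ∫ x in Cs, (L (P x) (mm P x') - Lmin (P x)) ∂μ := by
      rw [integral_sub (hL1 σk) hLm, integral_sub (hL1 (mm P x')) hLm]
      have := hmedInt (mm P x')
      linarith
    refine hstep1.trans (le_of_eq ?_)
    calc ∫ x in Cs, (L (P x) (mm P x') - Lmin (P x)) ∂μ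
        = ∫ x in Cs, (∑ p ∈ pairs n, 2 * (vv P p x - vv P p x') * (qq P p x - 1/2)) ∂μ := by
          refine setIntegral_congr_fun hCs fun x _ => ?_
          exact DKPI hP hT x x'
      _ = ∑ p ∈ pairs n, ∫ x in Cs, 2 * (vv P p x - vv P p x') * (qq P p x - 1/2) ∂μ := by
          refine integral_finset_sum _ fun p _ => ?_
          have heq : (fun x => 2 * (vv P p x - vv P p x') * (qq P p x - 1/2))
              = fun x => 2 * (vv P p x * (qq P p x - 1/2))
                  - (2 * vv P p x') * (qq P p x - 1/2) := by
            funext x; ring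
          rw [heq]
          exact ((hVUint p).const_mul 2).sub ((hUint p).const_mul _)
      _ = ∑ p ∈ pairs n, (2 * (∫ x in Cs, vv P p x * (qq P p x - 1/2) ∂μ)
            - (2 * (∫ x in Cs, (qq P p x - 1/2) ∂μ)) * vv P p x') := by
          refine Finset.sum_congr rfl fun p _ => ?_
          have heq : (fun x => 2 * (vv P p x - vv P p x') * (qq P p x - 1/2))
              = fun x => 2 * (vv P p x * (qq P p x - 1/2))
                  - (2 * vv P p x') * (qq P p x - 1/2) := by
            funext x; ring
          rw [heq, integral_sub ((hVUint p).const_mul 2) ((hUint p).const_mul (2 * vv P p x')),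
            integral_const_mul, integral_const_mul]
          ring
  -- closed form for the symmetrized integrand
  have C2a : ∀ (x' : E) (p : Fin n × Fin n),
      (∫ x in Cs, (vv P p x - vv P p x') * (qq P p x - qq P p x') ∂μ)
        = (∫ x in Cs, vv P p x * (qq P p x - 1/2) ∂μ)
          - (∫ x in Cs, vv P p x ∂μ) * (qq P p x' - 1/2)
          - vv P p x' * (∫ x in Cs, (qq P p x - 1/2) ∂μ)
          + (μ Cs).toReal * (vv P p x' * (qq P p x' - 1/2)) := by
    intro x' p
    have i2 : IntegrableOn (fun x => vv P p x * (qq P p x' - 1/2)) Cs μ :=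
      (hVint p).mul_const _
    have i3 : IntegrableOn (fun x => vv P p x' * (qq P p x - 1/2)) Cs μ :=
      (hUint p).const_mul _
    have i12 : IntegrableOn (fun x => vv P p x * (qq P p x - 1/2)
        - vv P p x * (qq P p x' - 1/2)) Cs μ := (hVUint p).sub i2
    have i123 : IntegrableOn (fun x => vv P p x * (qq P p x - 1/2)
        - vv P p x * (qq P p x' - 1/2) - vv P p x' * (qq P p x - 1/2)) Cs μ := i12.sub i3
    have s3 : (∫ x in Cs, ((vv P p x * (qq P p x - 1/2) - vv P p x * (qq P p x' - 1/2)
          - vv P p x' * (qq P p x - 1/2)) + vv P p x' * (qq P p x' - 1/2)) ∂μ)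
        = (∫ x in Cs, (vv P p x * (qq P p x - 1/2) - vv P p x * (qq P p x' - 1/2)
          - vv P p x' * (qq P p x - 1/2)) ∂μ)
          + ∫ _x in Cs, vv P p x' * (qq P p x' - 1/2) ∂μ :=
      integral_add i123 (integrable_const _)
    have s2 : (∫ x in Cs, (vv P p x * (qq P p x - 1/2) - vv P p x * (qq P p x' - 1/2)
          - vv P p x' * (qq P p x - 1/2)) ∂μ)
        = (∫ x in Cs, (vv P p x * (qq P p x - 1/2) - vv P p x * (qq P p x' - 1/2)) ∂μ)
          - ∫ x in Cs, vv P p x' * (qq P p x - 1/2) ∂μ := integral_sub i12 i3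
    have s1 : (∫ x in Cs, (vv P p x * (qq P p x - 1/2) - vv P p x * (qq P p x' - 1/2)) ∂μ)
        = (∫ x in Cs, vv P p x * (qq P p x - 1/2) ∂μ)
          - ∫ x in Cs, vv P p x * (qq P p x' - 1/2) ∂μ := integral_sub (hVUint p) i2
    have t2 : (∫ x in Cs, vv P p x * (qq P p x' - 1/2) ∂μ)
        = (∫ x in Cs, vv P p x ∂μ) * (qq P p x' - 1/2) := integral_mul_const _ _
    have t3 : (∫ x in Cs, vv P p x' * (qq P p x - 1/2) ∂μ)
        = vv P p x' * ∫ x in Cs, (qq P p x - 1/2) ∂μ := integral_const_mul _ _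
    have t4 : (∫ _x in Cs, vv P p x' * (qq P p x' - 1/2) ∂μ)
        = (μ Cs).toReal * (vv P p x' * (qq P p x' - 1/2)) := by
      rw [setIntegral_const, smul_eq_mul, measureReal_def]
    have hpt : (∫ x in Cs, (vv P p x - vv P p x') * (qq P p x - qq P p x') ∂μ)
        = ∫ x in Cs, ((vv P p x * (qq P p x - 1/2) - vv P p x * (qq P p x' - 1/2)
          - vv P p x' * (qq P p x - 1/2)) + vv P p x' * (qq P p x' - 1/2)) ∂μ := by
      refine setIntegral_congr_fun hCs fun x _ => ?_
      ring
    rw [hpt, s3, s2, s1, t2, t3, t4]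
  -- Step C2 pointwise bound
  have C2b : ∀ x' ∈ Cs, (∑ p ∈ pairs n,
      ((∫ x in Cs, vv P p x * (qq P p x - 1/2) ∂μ)
        - (∫ x in Cs, vv P p x ∂μ) * (qq P p x' - 1/2)
        - vv P p x' * (∫ x in Cs, (qq P p x - 1/2) ∂μ)
        + (μ Cs).toReal * (vv P p x' * (qq P p x' - 1/2))))
      ≤ (μ Cs).toReal * (M * δ) := by
    intro x' hx'
    have habs : ∀ p : Fin n × Fin n,
        ((∫ x in Cs, vv P p x * (qq P p x - 1/2) ∂μ)
          - (∫ x in Cs, vv P p x ∂μ) * (qq P p x' - 1/2)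
          - vv P p x' * (∫ x in Cs, (qq P p x - 1/2) ∂μ)
          + (μ Cs).toReal * (vv P p x' * (qq P p x' - 1/2)))
        ≤ ∫ x in Cs, |qq P p x - qq P p x'| ∂μ := by
      intro p
      rw [← C2a x' p]
      have hint : IntegrableOn (fun x => (vv P p x - vv P p x') * (qq P p x - qq P p x')) Cs μ := by
        have heq : (fun x => (vv P p x - vv P p x') * (qq P p x - qq P p x'))
            = fun x => ((vv P p x * (qq P p x - 1/2) - vv P p x * (qq P p x' - 1/2)
                - vv P p x' * (qq P p x - 1/2)) + vv P p x' * (qq P p x' - 1/2)) := by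
          funext x; ring
        rw [heq]
        exact (((hVUint p).sub ((hVint p).mul_const _)).sub ((hUint p).const_mul _)).add
          (integrable_const _)
      refine setIntegral_mono_on hint (hAQint x' p) hCs fun x _ => ?_
      have h1 : |vv P p x - vv P p x'| ≤ 1 := by
        unfold vv
        split <;> split <;> norm_num
      calc (vv P p x - vv P p x') * (qq P p x - qq P p x')
          ≤ |(vv P p x - vv P p x') * (qq P p x - qq P p x')| := le_abs_self _
        _ = |vv P p x - vv P p x'| * |qq P p x - qq P p x'| := abs_mul _ _
        _ ≤ 1 * |qq P p x - qq P p x'| := mul_le_mul_of_nonneg_right h1 (abs_nonneg _)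
        _ = |qq P p x - qq P p x'| := one_mul _
    calc (∑ p ∈ pairs n, ((∫ x in Cs, vv P p x * (qq P p x - 1/2) ∂μ)
          - (∫ x in Cs, vv P p x ∂μ) * (qq P p x' - 1/2)
          - vv P p x' * (∫ x in Cs, (qq P p x - 1/2) ∂μ)
          + (μ Cs).toReal * (vv P p x' * (qq P p x' - 1/2))))
        ≤ ∑ p ∈ pairs n, ∫ x in Cs, |qq P p x - qq P p x'| ∂μ :=
          Finset.sum_le_sum fun p _ => habs p
      _ = ∫ x in Cs, (∑ p ∈ pairs n, |qq P p x - qq P p x'|) ∂μ :=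
          (integral_finset_sum _ fun p _ => hAQint x' p).symm
      _ ≤ ∫ _x in Cs, (M * δ) ∂μ := by
          refine setIntegral_mono_on (integrable_finset_sum _ fun p _ => hAQint x' p)
            (integrable_const _) hCs fun x hx => ?_
          calc ∑ p ∈ pairs n, |qq P p x - qq P p x'| ≤ M * ‖x - x'‖ := hLip x x'
            _ ≤ M * δ := mul_le_mul_of_nonneg_left (hδ x hx x' hx') hM
      _ = (μ Cs).toReal * (M * δ) := by rw [setIntegral_const, smul_eq_mul, measureReal_def]
  -- assemble
  have key : (μ Cs).toReal * (∫ x in Cs, (L (P x) σk - Lmin (P x)) ∂μ)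
      ≤ (μ Cs).toReal * ((μ Cs).toReal * (M * δ)) := by
    have hWint : IntegrableOn (fun x' => ∑ p ∈ pairs n,
        (2 * (∫ x in Cs, vv P p x * (qq P p x - 1/2) ∂μ)
          - (2 * (∫ x in Cs, (qq P p x - 1/2) ∂μ)) * vv P p x')) Cs μ :=
      integrable_finset_sum _ fun p _ =>
        (integrable_const _).sub ((hVint p).const_mul _)
    have hYint : ∀ p : Fin n × Fin n, IntegrableOn (fun x' =>
        ((∫ x in Cs, vv P p x * (qq P p x - 1/2) ∂μ)
          - (∫ x in Cs, vv P p x ∂μ) * (qq P p x' - 1/2)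
          - vv P p x' * (∫ x in Cs, (qq P p x - 1/2) ∂μ)
          + (μ Cs).toReal * (vv P p x' * (qq P p x' - 1/2)))) Cs μ := by
      intro p
      refine (((integrable_const _).sub ?_).sub ((hVint p).mul_const _)).add
        ((hVUint p).const_mul _)
      exact (hUint p).const_mul _
    calc (μ Cs).toReal * (∫ x in Cs, (L (P x) σk - Lmin (P x)) ∂μ)
        = ∫ _x' in Cs, (∫ x in Cs, (L (P x) σk - Lmin (P x)) ∂μ) ∂μ := by
          rw [setIntegral_const, smul_eq_mul, measureReal_def]
      _ ≤ ∫ x' in Cs, (∑ p ∈ pairs n, (2 * (∫ x in Cs, vv P p x * (qq P p x - 1/2) ∂μ)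
            - (2 * (∫ x in Cs, (qq P p x - 1/2) ∂μ)) * vv P p x')) ∂μ :=
          setIntegral_mono_on (integrable_const _) hWint hCs fun x' _ => C1 x'
      _ = ∑ p ∈ pairs n, ∫ x' in Cs, (2 * (∫ x in Cs, vv P p x * (qq P p x - 1/2) ∂μ)
            - (2 * (∫ x in Cs, (qq P p x - 1/2) ∂μ)) * vv P p x') ∂μ :=
          integral_finset_sum _ fun p _ => (integrable_const _).sub ((hVint p).const_mul _)
      _ = ∑ p ∈ pairs n, ∫ x' in Cs, ((∫ x in Cs, vv P p x * (qq P p x - 1/2) ∂μ)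
            - (∫ x in Cs, vv P p x ∂μ) * (qq P p x' - 1/2)
            - vv P p x' * (∫ x in Cs, (qq P p x - 1/2) ∂μ)
            + (μ Cs).toReal * (vv P p x' * (qq P p x' - 1/2))) ∂μ := by
          refine Finset.sum_congr rfl fun p _ => ?_
          have j2 : IntegrableOn (fun x' => (2 * (∫ x in Cs, (qq P p x - 1/2) ∂μ)) * vv P p x')
              Cs μ := (hVint p).const_mul _
          have u1 : (∫ x' in Cs, (2 * (∫ x in Cs, vv P p x * (qq P p x - 1/2) ∂μ)
                - (2 * (∫ x in Cs, (qq P p x - 1/2) ∂μ)) * vv P p x') ∂μ)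
              = (∫ _x' in Cs, (2 * (∫ x in Cs, vv P p x * (qq P p x - 1/2) ∂μ)) ∂μ)
                - ∫ x' in Cs, (2 * (∫ x in Cs, (qq P p x - 1/2) ∂μ)) * vv P p x' ∂μ :=
            integral_sub (integrable_const _) j2
          have u2 : (∫ _x' in Cs, (2 * (∫ x in Cs, vv P p x * (qq P p x - 1/2) ∂μ)) ∂μ)
              = (μ Cs).toReal * (2 * (∫ x in Cs, vv P p x * (qq P p x - 1/2) ∂μ)) := by
            rw [setIntegral_const, smul_eq_mul, measureReal_def]
          have u3 : (∫ x' in Cs, (2 * (∫ x in Cs, (qq P p x - 1/2) ∂μ)) * vv P p x' ∂μ)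
              = (2 * (∫ x in Cs, (qq P p x - 1/2) ∂μ)) * ∫ x' in Cs, vv P p x' ∂μ :=
            integral_const_mul _ _
          have k2 : IntegrableOn (fun x' => (∫ x in Cs, vv P p x ∂μ) * (qq P p x' - 1/2))
              Cs μ := (hUint p).const_mul _
          have k3 : IntegrableOn (fun x' => vv P p x' * (∫ x in Cs, (qq P p x - 1/2) ∂μ))
              Cs μ := (hVint p).mul_const _
          have k12 : IntegrableOn (fun x' => (∫ x in Cs, vv P p x * (qq P p x - 1/2) ∂μ)
              - (∫ x in Cs, vv P p x ∂μ) * (qq P p x' - 1/2)) Cs μ :=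
            (integrable_const _).sub k2
          have k123 : IntegrableOn (fun x' => (∫ x in Cs, vv P p x * (qq P p x - 1/2) ∂μ)
              - (∫ x in Cs, vv P p x ∂μ) * (qq P p x' - 1/2)
              - vv P p x' * (∫ x in Cs, (qq P p x - 1/2) ∂μ)) Cs μ := k12.sub k3
          have y3 : (∫ x' in Cs, (((∫ x in Cs, vv P p x * (qq P p x - 1/2) ∂μ)
                - (∫ x in Cs, vv P p x ∂μ) * (qq P p x' - 1/2)
                - vv P p x' * (∫ x in Cs, (qq P p x - 1/2) ∂μ))
                + (μ Cs).toReal * (vv P p x' * (qq P p x' - 1/2))) ∂μ)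
              = (∫ x' in Cs, ((∫ x in Cs, vv P p x * (qq P p x - 1/2) ∂μ)
                - (∫ x in Cs, vv P p x ∂μ) * (qq P p x' - 1/2)
                - vv P p x' * (∫ x in Cs, (qq P p x - 1/2) ∂μ)) ∂μ)
                + ∫ x' in Cs, (μ Cs).toReal * (vv P p x' * (qq P p x' - 1/2)) ∂μ :=
            integral_add k123 ((hVUint p).const_mul _)
          have y2 : (∫ x' in Cs, ((∫ x in Cs, vv P p x * (qq P p x - 1/2) ∂μ)
                - (∫ x in Cs, vv P p x ∂μ) * (qq P p x' - 1/2)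
                - vv P p x' * (∫ x in Cs, (qq P p x - 1/2) ∂μ)) ∂μ)
              = (∫ x' in Cs, ((∫ x in Cs, vv P p x * (qq P p x - 1/2) ∂μ)
                - (∫ x in Cs, vv P p x ∂μ) * (qq P p x' - 1/2)) ∂μ)
                - ∫ x' in Cs, vv P p x' * (∫ x in Cs, (qq P p x - 1/2) ∂μ) ∂μ :=
            integral_sub k12 k3
          have y1 : (∫ x' in Cs, ((∫ x in Cs, vv P p x * (qq P p x - 1/2) ∂μ)
                - (∫ x in Cs, vv P p x ∂μ) * (qq P p x' - 1/2)) ∂μ)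
              = (∫ _x' in Cs, (∫ x in Cs, vv P p x * (qq P p x - 1/2) ∂μ) ∂μ)
                - ∫ x' in Cs, (∫ x in Cs, vv P p x ∂μ) * (qq P p x' - 1/2) ∂μ :=
            integral_sub (integrable_const _) k2
          have z1 : (∫ _x' in Cs, (∫ x in Cs, vv P p x * (qq P p x - 1/2) ∂μ) ∂μ)
              = (μ Cs).toReal * ∫ x in Cs, vv P p x * (qq P p x - 1/2) ∂μ := by
            rw [setIntegral_const, smul_eq_mul, measureReal_def]
          have z2 : (∫ x' in Cs, (∫ x in Cs, vv P p x ∂μ) * (qq P p x' - 1/2) ∂μ)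
              = (∫ x in Cs, vv P p x ∂μ) * ∫ x' in Cs, (qq P p x' - 1/2) ∂μ :=
            integral_const_mul _ _
          have z3 : (∫ x' in Cs, vv P p x' * (∫ x in Cs, (qq P p x - 1/2) ∂μ) ∂μ)
              = (∫ x' in Cs, vv P p x' ∂μ) * ∫ x in Cs, (qq P p x - 1/2) ∂μ :=
            integral_mul_const _ _
          have z4 : (∫ x' in Cs, (μ Cs).toReal * (vv P p x' * (qq P p x' - 1/2)) ∂μ)
              = (μ Cs).toReal * ∫ x' in Cs, vv P p x' * (qq P p x' - 1/2) ∂μ :=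
            integral_const_mul _ _
          rw [u1, u2, u3, y3, y2, y1, z1, z2, z3, z4]
          ring
      _ = ∫ x' in Cs, (∑ p ∈ pairs n, ((∫ x in Cs, vv P p x * (qq P p x - 1/2) ∂μ)
            - (∫ x in Cs, vv P p x ∂μ) * (qq P p x' - 1/2)
            - vv P p x' * (∫ x in Cs, (qq P p x - 1/2) ∂μ)
            + (μ Cs).toReal * (vv P p x' * (qq P p x' - 1/2)))) ∂μ :=
          (integral_finset_sum _ fun p _ => hYint p).symm
      _ ≤ ∫ _x' in Cs, ((μ Cs).toReal * (M * δ)) ∂μ :=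
          setIntegral_mono_on (integrable_finset_sum _ fun p _ => hYint p)
            (integrable_const _) hCs C2b
      _ = (μ Cs).toReal * ((μ Cs).toReal * (M * δ)) := by rw [setIntegral_const, smul_eq_mul, measureReal_def]
  exact le_of_mul_le_mul_left key hc

end Cell

theorem stmt_13 {n : ℕ} {E : Type*} [NormedAddCommGroup E] [MeasurableSpace E]
    (μ : Measure E) [IsProbabilityMeasure μ]
    (P : E → Equiv.Perm (Fin n) → ℝ)
    (hP : ∀ x, IsProb (P x)) (hmeas : ∀ τ, Measurable fun x => P x τ)
    (hT : ∀ x, StochTrans (P x))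
    (M : ℝ) (hM : 0 ≤ M)
    (hLip : ∀ x x', ∑ p ∈ pairs n, |pp (P x) p.1 p.2 - pp (P x') p.1 p.2| ≤ M * ‖x - x'‖)
    (K : ℕ) (C : Fin K → Set E)
    (hC : ∀ k, MeasurableSet (C k))
    (hdisj : ∀ k l, k ≠ l → Disjoint (C k) (C l))
    (hcover : (⋃ k, C k) = Set.univ)
    (hpos : ∀ k, 0 < (μ (C k)).toReal)
    (δ : ℝ) (hδ : ∀ k, ∀ x ∈ C k, ∀ x' ∈ C k, ‖x - x'‖ ≤ δ)
    (σ : Fin K → Equiv.Perm (Fin n)) (s : E → Equiv.Perm (Fin n))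
    (hs : ∀ k, ∀ x ∈ C k, s x = σ k)
    (hmed : ∀ k, IsMedian (condP μ P (C k)) (σ k)) :
    Risk μ P s - RiskStar μ P ≤ M * δ := by
  classical
  have hcov : ∀ x : E, ∃ k, x ∈ C k := by
    intro x
    have : x ∈ ⋃ k, C k := by rw [hcover]; trivial
    exact Set.mem_iUnion.mp this
  have hsMeas : Measurable s := by
    apply measurable_to_countable'
    intro ρ
    have hset : s ⁻¹' {ρ} = ⋃ k, {x | x ∈ C k ∧ σ k = ρ} := by
      ext x
      simp only [Set.mem_preimage, Set.mem_singleton_iff, Set.mem_iUnion, Set.mem_setOf_eq]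
      constructor
      · intro h
        obtain ⟨k, hk⟩ := hcov x
        exact ⟨k, hk, by rw [← hs k x hk, h]⟩
      · rintro ⟨k, hk, hσ⟩
        rw [hs k x hk, hσ]
    rw [hset]
    refine MeasurableSet.iUnion fun k => ?_
    by_cases h : σ k = ρ
    · have : {x | x ∈ C k ∧ σ k = ρ} = C k := by ext x; simp [h]
      rw [this]; exact hC k
    · have : {x | x ∈ C k ∧ σ k = ρ} = ∅ := by ext x; simp [h]
      rw [this]; exact MeasurableSet.empty
  have hNp0 : (0:ℝ) ≤ ((pairs n).card : ℝ) := by positivity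
  have hLbound : ∀ (t : E → Equiv.Perm (Fin n)) x, |L (P x) (t x)| ≤ ((pairs n).card : ℝ) :=
    fun t x => abs_le.mpr ⟨by linarith [L_nonneg (hP x) (t x)], L_le (hP x) (t x)⟩
  have hLsInt : Integrable (fun x => L (P x) (s x)) μ :=
    integrable_of_bdd (measurable_Lcomp hmeas hsMeas) _ (hLbound s)
  have hLmInt : Integrable (fun x => Lmin (P x)) μ :=
    integrable_of_bdd (measurable_Lmin hmeas) ((pairs n).card : ℝ) fun x =>
      abs_le.mpr ⟨by linarith [Lmin_nonneg hP x], (Lmin_le (hP x) 1).trans (L_le (hP x) 1)⟩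
  have hRS : (∫ x, Lmin (P x) ∂μ) ≤ RiskStar μ P := by
    refine le_csInf ⟨Risk μ P (fun _ => 1), fun _ => 1, measurable_const, rfl⟩ ?_
    rintro r ⟨t, ht, rfl⟩
    rw [Risk]
    exact integral_mono hLmInt
      (integrable_of_bdd (measurable_Lcomp hmeas ht) _ (hLbound t))
      fun x => Lmin_le (hP x) (t x)
  have hdisj' : Pairwise (Function.onFun Disjoint C) := fun k l hkl => hdisj k l hkl
  have hsplit : ∀ (f : E → ℝ), Integrable f μ →
      ∫ x, f x ∂μ = ∑ k, ∫ x in C k, f x ∂μ := by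
    intro f hf
    have h1 : ∫ x, f x ∂μ = ∫ x in ⋃ k, C k, f x ∂μ := by
      rw [hcover, setIntegral_univ]
    rw [h1, integral_iUnion hC hdisj' hf.integrableOn, tsum_fintype]
  have hcell : ∀ k, (∫ x in C k, L (P x) (s x) ∂μ) - (∫ x in C k, Lmin (P x) ∂μ)
      ≤ (μ (C k)).toReal * (M * δ) := by
    intro k
    have he : ∫ x in C k, L (P x) (s x) ∂μ = ∫ x in C k, L (P x) (σ k) ∂μ :=
      setIntegral_congr_fun (hC k) fun x hx => by
        show L (P x) (s x) = L (P x) (σ k)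
        rw [hs k x hx]
    have hσint : IntegrableOn (fun x => L (P x) (σ k)) (C k) μ :=
      (integrable_of_bdd (measurable_LP hmeas (σ k)) ((pairs n).card : ℝ) fun x =>
        abs_le.mpr ⟨by linarith [L_nonneg (hP x) (σ k)], L_le (hP x) (σ k)⟩).integrableOn
    have hsub : (∫ x in C k, (L (P x) (σ k) - Lmin (P x)) ∂μ)
        = (∫ x in C k, L (P x) (σ k) ∂μ) - ∫ x in C k, Lmin (P x) ∂μ :=
      integral_sub hσint hLmInt.integrableOn
    rw [he, ← hsub]
    exact cell_bound μ P hP hmeas hT M hM hLip (C k) (hC k) (hpos k) δ (hδ k) (σ k) (hmed k)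
  have htot : ∑ k, (μ (C k)).toReal = 1 := by
    have h1 : ∑' k, μ (C k) = 1 := by
      rw [← measure_iUnion hdisj' hC, hcover, measure_univ]
    rw [tsum_fintype] at h1
    calc ∑ k, (μ (C k)).toReal = (∑ k, μ (C k)).toReal :=
          (ENNReal.toReal_sum fun k _ => measure_ne_top μ _).symm
      _ = 1 := by rw [h1]; exact ENNReal.toReal_one
  calc Risk μ P s - RiskStar μ P ≤ Risk μ P s - ∫ x, Lmin (P x) ∂μ := by linarith [hRS]
    _ = ∑ k, ((∫ x in C k, L (P x) (s x) ∂μ) - ∫ x in C k, Lmin (P x) ∂μ) := by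
        rw [Risk, hsplit _ hLsInt, hsplit _ hLmInt, Finset.sum_sub_distrib]
    _ ≤ ∑ k, (μ (C k)).toReal * (M * δ) := Finset.sum_le_sum fun k _ => hcell k
    _ = (∑ k, (μ (C k)).toReal) * (M * δ) := by rw [Finset.sum_mul]
    _ = M * δ := by rw [htot, one_mul]
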